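/- Directed colimits of free 𝔽_p[ℤ/p]-modules inside a fixed module: Let p be a prime, H cyclic of order p, M an 𝔽_p[H]-module, and let 𝒯 be a chain (totally ordered family) of free 𝔽_p[H]-submodules of M. Then the union W = ⋃_{S ∈ 𝒯} S is a free 𝔽_p[H]-submodule of M. -/

import Mathlib

/-- The group algebra `𝔽_p[H]` for `H` the cyclic group of order `p`, generated by `σ`. -/
abbrev Sp (p : ℕ) : Type := MonoidAlgebra (ZMod p) (Multiplicative (ZMod p))

/-- The generator `σ` of the cyclic group `H`, as an element of the group algebra. -/
noncomputable def sigma (p : ℕ) : Sp p :=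
  MonoidAlgebra.of (ZMod p) (Multiplicative (ZMod p)) (Multiplicative.ofAdd 1)

/-- Scalar multiplication by `s ∈ 𝔽_p[H]` as an `𝔽_p`-linear endomorphism. -/
noncomputable def smulMap (p : ℕ) (M : Type*) [AddCommGroup M] [Module (Sp p) M]
    [Module (ZMod p) M] [IsScalarTower (ZMod p) (Sp p) M] (s : Sp p) :
    M →ₗ[ZMod p] M :=
  (LinearMap.lsmul (Sp p) M s).restrictScalars (ZMod p)
variable (p : ℕ) [Fact p.Prime]

lemma sigma_pow_val (k : ZMod p) : sigma p ^ k.val = MonoidAlgebra.of (ZMod p) (Multiplicative (ZMod p)) (Multiplicative.ofAdd k) := by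
  rw [sigma, ← map_pow]
  congr 1
  rw [← ofAdd_nsmul]
  congr 1
  simp [ZMod.natCast_val, ZMod.cast_id]

lemma sigma_pow_p : sigma p ^ p = 1 := by
  rw [sigma, ← map_pow, ← ofAdd_nsmul]
  have h : (p • (1 : ZMod p)) = 0 := by simp
  rw [h]
  exact (MonoidAlgebra.one_def).symm

lemma algebraMap_inj : Function.Injective (algebraMap (ZMod p) (Sp p)) := fun a b h => by
  have := congrArg (fun x : Sp p => x.coeff 1) h
  simpa [MonoidAlgebra.coe_algebraMap, MonoidAlgebra.coeff_single] using this

lemma charp : CharP (Sp p) p :=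
  charP_of_injective_ringHom (algebraMap_inj p) p

lemma tau_pow_p : (sigma p - 1) ^ p = 0 := by
  haveI := charp p
  haveI := Fact.out (p := p.Prime)
  rw [sub_pow_char, sigma_pow_p, one_pow, sub_self]

open Polynomial in
noncomputable def psi : AdjoinRoot ((X : (ZMod p)[X]) ^ p) →ₐ[ZMod p] Sp p :=
  AdjoinRoot.liftAlgHom _ (Algebra.ofId _ _) (sigma p - 1) (by
    rw [Polynomial.eval₂_X_pow, tau_pow_p])

open Polynomial in
lemma psi_root : psi p (AdjoinRoot.root ((Polynomial.X : Polynomial (ZMod p)) ^ p)) = sigma p - 1 := by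
  simp [psi, AdjoinRoot.liftAlgHom_root]

lemma psi_surj : Function.Surjective (psi p) := by
  have hs : sigma p ∈ (psi p).range := by
    refine ⟨AdjoinRoot.root _ + 1, ?_⟩
    show (psi p) (AdjoinRoot.root ((Polynomial.X : Polynomial (ZMod p)) ^ p) + 1) = sigma p
    have h1 := map_add (psi p) (AdjoinRoot.root ((Polynomial.X : Polynomial (ZMod p)) ^ p)) 1
    rw [h1, psi_root, map_one]
    ring
  intro x
  rw [← AlgHom.mem_range]
  induction x using MonoidAlgebra.induction_on with
  | of g =>
      have : MonoidAlgebra.of (ZMod p) (Multiplicative (ZMod p)) g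
          = sigma p ^ (Multiplicative.toAdd g).val := by
        rw [sigma_pow_val]; rfl
      rw [this]
      exact pow_mem hs _
  | add f g hf hg => exact add_mem hf hg
  | smul r f hf => exact Subalgebra.smul_mem _ hf r

open Polynomial in
lemma psi_inj : Function.Injective (psi p) := by
  haveI : FiniteDimensional (ZMod p) (AdjoinRoot ((X : (ZMod p)[X]) ^ p)) :=
    Module.Finite.of_basis (AdjoinRoot.powerBasis' (monic_X_pow (R := ZMod p) (n := p))).basis
  haveI : FiniteDimensional (ZMod p) (Sp p) :=
    Module.Finite.of_basis
      (MonoidAlgebra.basis (Multiplicative (ZMod p)) (ZMod p))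
  have h1 : Module.finrank (ZMod p) (AdjoinRoot ((X : (ZMod p)[X]) ^ p)) = p := by
    rw [(AdjoinRoot.powerBasis' (monic_X_pow (R := ZMod p) (n := p))).finrank,
      AdjoinRoot.powerBasis'_dim, natDegree_X_pow]
  have h2 : Module.finrank (ZMod p) (Sp p) = p := by
    have h3 : Module.finrank (ZMod p) (Multiplicative (ZMod p) →₀ (ZMod p)) = p := by
      rw [Module.finrank_finsupp_self]
      simp only [Fintype.card_multiplicative, ZMod.card]
    rw [(MonoidAlgebra.coeffLinearEquiv (ZMod p)).finrank_eq]; exact h3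
  have h4 := (LinearMap.injective_iff_surjective_of_finrank_eq_finrank
    (f := (psi p).toLinearMap) (by rw [h1, h2])).2 (psi_surj p)
  exact h4

open Polynomial in
lemma tau_ann (c : Sp p) (h : c * (sigma p - 1) = 0) :
    ∃ s, c = (sigma p - 1) ^ (p - 1) * s := by
  haveI hp := Fact.out (p := p.Prime)
  obtain ⟨a, rfl⟩ := psi_surj p c
  obtain ⟨f, rfl⟩ := AdjoinRoot.mk_surjective a
  rw [← psi_root, ← map_mul] at h
  have h0 : AdjoinRoot.mk ((X : (ZMod p)[X]) ^ p) f * AdjoinRoot.root _ = 0 :=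
    psi_inj p (by rw [h, map_zero])
  rw [← AdjoinRoot.mk_X, ← map_mul, AdjoinRoot.mk_eq_zero] at h0
  have hXp : (X : (ZMod p)[X]) ^ p = X ^ (p - 1) * X := by
    rw [← pow_succ]
    congr 1
    exact (Nat.succ_pred_eq_of_pos hp.pos).symm
  rw [hXp] at h0
  have hdvd : (X : (ZMod p)[X]) ^ (p - 1) ∣ f :=
    (mul_dvd_mul_iff_right (X_ne_zero (R := ZMod p))).mp h0
  obtain ⟨g, rfl⟩ := hdvd
  refine ⟨psi p (AdjoinRoot.mk _ g), ?_⟩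
  rw [← psi_root, ← map_pow, ← map_mul]
  congr 1

open Polynomial in
lemma tau_decomp (c : Sp p) :
    ∃ (a : ZMod p) (r : Sp p), c = algebraMap (ZMod p) (Sp p) a + (sigma p - 1) * r := by
  obtain ⟨x, rfl⟩ := psi_surj p c
  obtain ⟨f, rfl⟩ := AdjoinRoot.mk_surjective x
  obtain ⟨g, hg⟩ : (X : (ZMod p)[X]) ∣ f - C (f.coeff 0) := X_dvd_iff.mpr (by simp)
  refine ⟨f.coeff 0, psi p (AdjoinRoot.mk _ g), ?_⟩
  have hf : f = C (f.coeff 0) + X * g := by rw [← hg]; ring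
  conv_lhs => rw [hf]
  rw [map_add, map_mul, map_add, map_mul, AdjoinRoot.mk_X, psi_root]
  congr 1
  rw [AdjoinRoot.mk_C, ← AdjoinRoot.algebraMap_eq, AlgHom.commutes]

lemma cond_of_free (N : Type*) [AddCommGroup N] [Module (Sp p) N] [Module.Free (Sp p) N]
    (x : N) (hx : (sigma p - 1) • x = 0) : ∃ y, x = (sigma p - 1) ^ (p - 1) • y := by
  classical
  set τ : Sp p := sigma p - 1 with hτ
  let b := Module.Free.chooseBasis (Sp p) N
  set c : _ →₀ Sp p := b.repr x with hcdef
  have h0 : τ • c = 0 := by rw [hcdef, ← map_smul, hx, map_zero]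
  have hc : ∀ i, c i * τ = 0 := by
    intro i
    have h1 : (τ • c) i = 0 := by rw [h0]; rfl
    rw [Finsupp.smul_apply, smul_eq_mul] at h1
    rw [mul_comm]; exact h1
  let f : Sp p → Sp p := fun r =>
    if r = 0 then 0 else if hr : ∃ s, r = τ ^ (p - 1) * s then hr.choose else 0
  have hf0 : f 0 = 0 := by simp [f]
  have hfspec : ∀ i, τ ^ (p - 1) * f (c i) = c i := by
    intro i
    by_cases h1 : c i = 0
    · rw [h1, hf0, mul_zero]
    · have h2 : ∃ s, c i = τ ^ (p - 1) * s := tau_ann p (c i) (hc i)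
      simp only [f, if_neg h1, dif_pos h2]
      exact h2.choose_spec.symm
  refine ⟨b.repr.symm (c.mapRange f hf0), ?_⟩
  apply b.repr.injective
  rw [map_smul, LinearEquiv.apply_symm_apply, ← hcdef]
  ext i
  rw [Finsupp.smul_apply, Finsupp.mapRange_apply, smul_eq_mul, hfspec]

set_option maxHeartbeats 1000000 in
lemma free_of_cond (N : Type*) [AddCommGroup N] [Module (Sp p) N]
    (hcond : ∀ x : N, (sigma p - 1) • x = 0 → ∃ y, x = (sigma p - 1) ^ (p - 1) • y) :
    Module.Free (Sp p) N := by
  classical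
  have hp := Fact.out (p := p.Prime)
  set τ : Sp p := sigma p - 1 with hτ
  have hτp : τ ^ p = 0 := tau_pow_p p
  have hτp1 : τ ^ (p - 1) * τ = 0 := by
    rw [← pow_succ, show p - 1 + 1 = p by have := hp.two_le; omega, hτp]
  letI instk : Module (ZMod p) N := Module.compHom N (algebraMap (ZMod p) (Sp p))
  have ksmul : ∀ (a : ZMod p) (x : N), a • x = (algebraMap (ZMod p) (Sp p) a) • x :=
    fun a x => rfl
  have kcomm : ∀ (a : ZMod p) (r : Sp p) (x : N), r • (a • x) = a • (r • x) := by
    intro a r x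
    rw [ksmul, ksmul, ← mul_smul, ← mul_smul, mul_comm]
  let K : Submodule (ZMod p) N :=
    { carrier := {x | τ • x = 0}
      add_mem' := fun hx hy => by
        simp only [Set.mem_setOf_eq] at *
        rw [smul_add, hx, hy, add_zero]
      zero_mem' := by simp only [Set.mem_setOf_eq, smul_zero]
      smul_mem' := fun a x hx => by
        simp only [Set.mem_setOf_eq] at *
        rw [kcomm, hx, smul_zero] }
  let κ := Module.Free.ChooseBasisIndex (ZMod p) K
  let b : Module.Basis κ (ZMod p) K := Module.Free.chooseBasis (ZMod p) K
  have hmex : ∀ i : κ, ∃ y : N, ((b i : K) : N) = τ ^ (p - 1) • y := fun i => hcond _ (b i).2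
  choose m hm using hmex
  let φ : (κ →₀ Sp p) →ₗ[Sp p] N := Finsupp.linearCombination (Sp p) m
  -- step 1 : every element of K is τ^(p-1) times an element of the range of φ
  have step1 : ∀ x : N, τ • x = 0 → ∃ z, z ∈ LinearMap.range φ ∧ x = τ ^ (p - 1) • z := by
    intro x hx
    set a : κ →₀ ZMod p := b.repr ⟨x, hx⟩ with hadef
    refine ⟨φ (a.mapRange (algebraMap (ZMod p) (Sp p)) (map_zero _)),
      LinearMap.mem_range_self _ _, ?_⟩
    have h1 : x = a.sum fun i t => t • ((b i : K) : N) := by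
      have h2 : (⟨x, hx⟩ : K) = a.sum fun i t => t • b i := by
        conv_lhs => rw [← b.linearCombination_repr ⟨x, hx⟩]
        rw [Finsupp.linearCombination_apply]
      have h3 := congrArg (K.subtype) h2
      rw [map_finsuppSum] at h3
      simpa using h3
    have h4 : φ (a.mapRange (algebraMap (ZMod p) (Sp p)) (map_zero _))
        = a.sum fun i t => (algebraMap (ZMod p) (Sp p) t) • m i := by
      rw [show φ = Finsupp.linearCombination (Sp p) m from rfl,
        Finsupp.linearCombination_apply,
        Finsupp.sum_mapRange_index (fun i => by simp)]
    rw [h1, h4, Finsupp.smul_sum]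
    apply Finsupp.sum_congr
    intro i _
    rw [← mul_smul, mul_comm, mul_smul, ← hm i, ← ksmul]
  -- kernels of powers
  have kerpow : ∀ i, i ≤ p → ∀ x : N, τ ^ i • x = 0 → ∃ y, x = τ ^ (p - i) • y := by
    intro i
    induction i with
    | zero =>
        intro _ x hx
        rw [pow_zero, one_smul] at hx
        exact ⟨0, by rw [hx, smul_zero]⟩
    | succ i IH =>
        intro hi x hx
        have h1 : τ • (τ ^ i • x) = 0 := by
          rw [← mul_smul, ← pow_succ', hx]
        obtain ⟨y, hy⟩ := hcond _ h1
        have h2 : τ ^ (p - 1) = τ ^ i * τ ^ (p - 1 - i) := by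
          rw [← pow_add]; congr 1; omega
        have h3 : τ ^ i • (x - τ ^ (p - 1 - i) • y) = 0 := by
          rw [smul_sub, ← mul_smul, ← h2, ← hy, sub_self]
        obtain ⟨w, hw⟩ := IH (Nat.le_of_succ_le hi) _ h3
        refine ⟨y + τ • w, ?_⟩
        have h5 : (p - (i + 1)) + 1 = p - i := by omega
        have h6 : p - 1 - i = p - (i + 1) := by omega
        rw [smul_add, ← mul_smul, ← pow_succ, h5, ← hw, h6]
        abel
  -- surjectivity
  have main : ∀ j, ∀ x : N, ∃ z ∈ LinearMap.range φ, ∃ w, x = z + τ ^ j • w := by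
    intro j
    induction j with
    | zero => exact fun x => ⟨0, Submodule.zero_mem _, x, by rw [pow_zero, one_smul, zero_add]⟩
    | succ j IH =>
        intro x
        obtain ⟨z, hz, w, rfl⟩ := IH x
        have h1 : τ • (τ ^ (p - 1) • w) = 0 := by
          rw [← mul_smul, mul_comm, hτp1, zero_smul]
        obtain ⟨z1, hz1, hweq⟩ := step1 _ h1
        have h2 : τ ^ (p - 1) • (w - z1) = 0 := by rw [smul_sub, ← hweq, sub_self]
        obtain ⟨w', hw'⟩ := kerpow (p - 1) (Nat.sub_le p 1) _ h2
        have hp1 : p - (p - 1) = 1 := by have := hp.two_le; omega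
        rw [hp1, pow_one] at hw'
        have hw : w = z1 + τ • w' := sub_eq_iff_eq_add'.mp hw'
        refine ⟨z + τ ^ j • z1, Submodule.add_mem _ hz (Submodule.smul_mem _ _ hz1), w', ?_⟩
        rw [hw, smul_add, ← add_assoc, ← mul_smul, ← pow_succ]
  have hsurj : Function.Surjective φ := by
    intro x
    obtain ⟨z, hz, w, hx⟩ := main p x
    rw [hτp, zero_smul, add_zero] at hx
    obtain ⟨c, hc⟩ := hz
    exact ⟨c, by rw [hc, hx]⟩
  -- injectivity
  have hinj : ∀ c : κ →₀ Sp p, φ c = 0 → c = 0 := by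
    intro c hc
    by_contra hne
    have hP0 : τ ^ 0 • c ≠ 0 := by rw [pow_zero, one_smul]; exact hne
    set j := Nat.findGreatest (fun j => τ ^ j • c ≠ 0) p with hjdef
    have hPj : τ ^ j • c ≠ 0 := by
      have h := Nat.findGreatest_spec (P := fun n => τ ^ n • c ≠ 0) (Nat.zero_le p) hP0
      rw [← hjdef] at h
      exact h
    have hjlt : j < p := by
      rcases Nat.lt_or_ge j p with h | h
      · exact h
      · exfalso
        apply hPj
        have : τ ^ j = 0 := pow_eq_zero_of_le h hτp
        rw [this, zero_smul]
    have hj1 : τ ^ (j + 1) • c = 0 := by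
      by_contra hne1
      have h := Nat.findGreatest_is_greatest (P := fun n => τ ^ n • c ≠ 0)
        (k := j + 1) (n := p) (by rw [← hjdef]; exact Nat.lt_succ_self j) hjlt
      exact h hne1
    have h1 : τ • (τ ^ j • c) = 0 := by rw [← mul_smul, ← pow_succ', hj1]
    obtain ⟨d, hd⟩ := cond_of_free p (κ →₀ Sp p) (τ ^ j • c) h1
    -- φ of both sides
    have hφ0 : τ ^ (p - 1) • φ d = 0 := by
      have h2 : φ (τ ^ j • c) = 0 := by rw [map_smul, hc, smul_zero]
      rw [hd, map_smul] at h2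
      exact h2
    choose aa rr haa using fun i => tau_decomp p (d i)
    have hterm : ∀ i, τ ^ (p - 1) * d i = algebraMap (ZMod p) (Sp p) (aa i) * τ ^ (p - 1) := by
      intro i
      rw [haa i, mul_add, mul_comm (τ ^ (p - 1)) (τ * rr i), mul_assoc, mul_comm (rr i),
        ← mul_assoc, mul_comm τ, hτp1, zero_mul, add_zero, mul_comm]
    have hsum0 : (∑ i ∈ d.support, aa i • ((b i : K) : N)) = 0 := by
      have h3 : φ (τ ^ (p - 1) • d) = ∑ i ∈ d.support, aa i • ((b i : K) : N) := by
        rw [map_smul]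
        rw [show φ d = d.sum fun i r => r • m i from Finsupp.linearCombination_apply _ _,
          Finsupp.smul_sum, Finsupp.sum]
        apply Finset.sum_congr rfl
        intro i _
        rw [← mul_smul, hterm i, mul_smul, ← hm i, ← ksmul]
      rw [← h3, map_smul, hφ0]
    have hli : LinearIndependent (ZMod p) (fun i : κ => ((b i : K) : N)) :=
      b.linearIndependent.map' K.subtype (Submodule.ker_subtype K)
    have haa0 : ∀ i ∈ d.support, aa i = 0 :=
      linearIndependent_iff'.mp hli d.support aa hsum0
    have hdz : τ ^ (p - 1) • d = 0 := by
      ext i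
      rw [Finsupp.smul_apply, smul_eq_mul, Finsupp.coe_zero, Pi.zero_apply]
      by_cases hi : i ∈ d.support
      · rw [hterm i, haa0 i hi, map_zero, zero_mul]
      · rw [Finsupp.notMem_support_iff.mp hi, mul_zero]
    rw [hdz] at hd
    exact hPj hd
  have hker : Function.Injective φ := by
    rw [← LinearMap.ker_eq_bot]
    exact LinearMap.ker_eq_bot'.mpr hinj
  exact Module.Free.of_equiv (LinearEquiv.ofBijective φ ⟨hker, hsurj⟩)

/-- The union of a nonempty chain of free `𝔽_p[ℤ/p]`-submodules of `M` is a free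
submodule of `M`. -/
theorem stmt18 (p : ℕ) [Fact p.Prime]
    (M : Type*) [AddCommGroup M] [Module (Sp p) M]
    (T : Set (Submodule (Sp p) M)) (hne : T.Nonempty) (hchain : IsChain (· ≤ ·) T)
    (hfree : ∀ S ∈ T, Module.Free (Sp p) S) :
    ∃ W : Submodule (Sp p) M, ((W : Set M) = ⋃ S ∈ T, (S : Set M)) ∧
      Module.Free (Sp p) W := by
  haveI : Nonempty T := hne.to_subtype
  have hdir : Directed (· ≤ ·) (fun s : T => (s : Submodule (Sp p) M)) :=
    directedOn_iff_directed.mp hchain.directedOn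
  set W : Submodule (Sp p) M := ⨆ s : T, (s : Submodule (Sp p) M) with hWdef
  have hWcoe : (W : Set M) = ⋃ S ∈ T, (S : Set M) := by
    rw [hWdef, Submodule.coe_iSup_of_directed _ hdir]
    exact Set.iUnion_coe_set _ _
  refine ⟨W, hWcoe, ?_⟩
  apply free_of_cond
  intro x hx
  have hxW : (x : M) ∈ (W : Set M) := x.2
  rw [hWcoe] at hxW
  simp only [Set.mem_iUnion] at hxW
  obtain ⟨S, hS, hxS⟩ := hxW
  haveI := hfree S hS
  have hSW : S ≤ W := le_iSup (fun s : T => (s : Submodule (Sp p) M)) ⟨S, hS⟩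
  set xS : S := ⟨(x : M), hxS⟩ with hxSdef
  have hx0 : (sigma p - 1) • xS = 0 := by
    apply Subtype.ext
    have : ((sigma p - 1) • xS : S) = ((sigma p - 1) • (x : M)) := rfl
    rw [this]
    have h2 : ((sigma p - 1) • x : W) = (0 : W) := hx
    have h3 : ((sigma p - 1) • (x : M)) = ((((sigma p - 1) • x : W)) : M) := rfl
    rw [h3, h2]
    rfl
  obtain ⟨y, hy⟩ := cond_of_free p S xS hx0
  refine ⟨⟨(y : M), hSW y.2⟩, ?_⟩
  apply Subtype.ext
  have h4 : (x : M) = (xS : M) := rfl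
  rw [h4, hy]
  rfl
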